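/- Let F ⊆ S, M̃ the truncated operator for F, Q^k = M̃^k(0), and Q*(s) = lim_k Q^k(s) (which exists for every s). Then Q* is a fixed point of M̃: (M̃ Q*)(s) = Q*(s) for all s ∈ S. -/

import Mathlib

open Finset Filter Topology

/-- The standard probability simplex on a finite type `A`. -/
def simplexSet (A : Type*) [Fintype A] : Set (A → ℝ) :=
  {μ | (∀ a, 0 ≤ μ a) ∧ ∑ a, μ a = 1}

/-- The minimax Bellman operator:
`(M Q)(s) = sup_{μ ∈ simplex} inf_{b ∈ B} ∑_a μ(a) * ∑_{s'} P s a b s' * Q s'`. -/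
noncomputable def Mop {S A B : Type*} [Fintype S] [Fintype A] [Fintype B]
    (P : S → A → B → S → ℝ) (Q : S → ℝ) (s : S) : ℝ :=
  sSup ((fun μ : A → ℝ => ⨅ b : B, ∑ a, μ a * ∑ s', P s a b s' * Q s') '' simplexSet A)

open Classical in
/-- The truncated minimax Bellman operator for an accepting set `F`. -/
noncomputable def Mtrunc {S A B : Type*} [Fintype S] [Fintype A] [Fintype B]
    (P : S → A → B → S → ℝ) (F : Set S) (Q : S → ℝ) (s : S) : ℝ :=
  if s ∈ F then 1 else Mop P Q s

/-- The policy-evaluation operator for a stationary defender policy `μ`. -/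
noncomputable def Mpol {S A B : Type*} [Fintype S] [Fintype A] [Fintype B]
    (P : S → A → B → S → ℝ) (μ : S → A → ℝ) (Q : S → ℝ) (s : S) : ℝ :=
  ⨅ b : B, ∑ a, μ s a * ∑ s', P s a b s' * Q s'

open Classical in
/-- The truncated policy-evaluation operator for an accepting set `F`. -/
noncomputable def MpolTrunc {S A B : Type*} [Fintype S] [Fintype A] [Fintype B]
    (P : S → A → B → S → ℝ) (μ : S → A → ℝ) (F : Set S) (Q : S → ℝ) (s : S) : ℝ :=
  if s ∈ F then 1 else Mpol P μ Q s

set_option linter.unusedSectionVars false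

section helpers

variable {S A B : Type*} [Fintype S] [Fintype A] [Fintype B]
  [Nonempty S] [Nonempty A] [Nonempty B]
  (P : S → A → B → S → ℝ)
  (hP0 : ∀ s a b s', 0 ≤ P s a b s')
  (hP1 : ∀ s a b, ∑ s', P s a b s' = 1)

lemma simplex_nonempty : (simplexSet A).Nonempty := by
  classical
  obtain ⟨a0⟩ := (inferInstance : Nonempty A)
  refine ⟨fun a => if a = a0 then 1 else 0, fun a => ?_, ?_⟩
  · show (0:ℝ) ≤ if a = a0 then 1 else 0; split <;> norm_num
  · simp [Finset.sum_ite_eq']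

include hP0 hP1 in
lemma inner_le_bound (Q : S → ℝ) (s : S) (a : A) (b : B) :
    ∑ s', P s a b s' * Q s' ≤ ∑ s', |Q s'| := by
  refine Finset.sum_le_sum fun s' _ => ?_
  calc P s a b s' * Q s' ≤ P s a b s' * |Q s'| := by
        exact mul_le_mul_of_nonneg_left (le_abs_self _) (hP0 s a b s')
    _ ≤ 1 * |Q s'| := by
        refine mul_le_mul_of_nonneg_right ?_ (abs_nonneg _)
        calc P s a b s' ≤ ∑ t, P s a b t :=
              Finset.single_le_sum (fun t _ => hP0 s a b t) (Finset.mem_univ s')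
          _ = 1 := hP1 s a b
    _ = |Q s'| := one_mul _

include hP0 hP1 in
lemma mop_bddAbove (Q : S → ℝ) (s : S) :
    BddAbove ((fun μ : A → ℝ => ⨅ b : B, ∑ a, μ a * ∑ s', P s a b s' * Q s') '' simplexSet A) := by
  refine ⟨∑ s', |Q s'|, ?_⟩
  rintro x ⟨μ, hμ, rfl⟩
  obtain ⟨b0⟩ := (inferInstance : Nonempty B)
  calc (⨅ b : B, ∑ a, μ a * ∑ s', P s a b s' * Q s')
      ≤ ∑ a, μ a * ∑ s', P s a b0 s' * Q s' :=
        ciInf_le (Set.Finite.bddBelow (Set.finite_range _)) b0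
    _ ≤ ∑ a, μ a * ∑ s', |Q s'| := by
        refine Finset.sum_le_sum fun a _ => ?_
        exact mul_le_mul_of_nonneg_left (inner_le_bound P hP0 hP1 Q s a b0) (hμ.1 a)
    _ = ∑ s', |Q s'| := by rw [← Finset.sum_mul, hμ.2, one_mul]

include hP0 hP1 in
lemma inner_abs_le {Q Q' : S → ℝ} {ε : ℝ} (hε : ∀ s', |Q s' - Q' s'| ≤ ε)
    (s : S) (a : A) (b : B) :
    |∑ s', P s a b s' * Q s' - ∑ s', P s a b s' * Q' s'| ≤ ε := by
  rw [← Finset.sum_sub_distrib]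
  calc |∑ s', (P s a b s' * Q s' - P s a b s' * Q' s')|
      ≤ ∑ s', |P s a b s' * Q s' - P s a b s' * Q' s'| := Finset.abs_sum_le_sum_abs _ _
    _ = ∑ s', P s a b s' * |Q s' - Q' s'| := by
        refine Finset.sum_congr rfl fun s' _ => ?_
        rw [← mul_sub, abs_mul, abs_of_nonneg (hP0 s a b s')]
    _ ≤ ∑ s', P s a b s' * ε := by
        refine Finset.sum_le_sum fun s' _ => mul_le_mul_of_nonneg_left (hε s') (hP0 s a b s')
    _ = ε := by rw [← Finset.sum_mul, hP1 s a b, one_mul]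

include hP0 hP1 in
lemma mu_abs_le {Q Q' : S → ℝ} {ε : ℝ} (hε : ∀ s', |Q s' - Q' s'| ≤ ε)
    (s : S) {μ : A → ℝ} (hμ : μ ∈ simplexSet A) (b : B) :
    |∑ a, μ a * ∑ s', P s a b s' * Q s' - ∑ a, μ a * ∑ s', P s a b s' * Q' s'| ≤ ε := by
  rw [← Finset.sum_sub_distrib]
  calc |∑ a, (μ a * ∑ s', P s a b s' * Q s' - μ a * ∑ s', P s a b s' * Q' s')|
      ≤ ∑ a, |μ a * ∑ s', P s a b s' * Q s' - μ a * ∑ s', P s a b s' * Q' s'| :=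
        Finset.abs_sum_le_sum_abs _ _
    _ = ∑ a, μ a * |∑ s', P s a b s' * Q s' - ∑ s', P s a b s' * Q' s'| := by
        refine Finset.sum_congr rfl fun a _ => ?_
        rw [← mul_sub, abs_mul, abs_of_nonneg (hμ.1 a)]
    _ ≤ ∑ a, μ a * ε := by
        refine Finset.sum_le_sum fun a _ =>
          mul_le_mul_of_nonneg_left (inner_abs_le P hP0 hP1 hε s a b) (hμ.1 a)
    _ = ε := by rw [← Finset.sum_mul, hμ.2, one_mul]

include hP0 hP1 in
lemma mop_le {Q Q' : S → ℝ} {ε : ℝ} (hε : ∀ s', |Q s' - Q' s'| ≤ ε) (s : S) :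
    Mop P Q s ≤ Mop P Q' s + ε := by
  refine csSup_le ((simplex_nonempty (A := A)).image _) ?_
  rintro x ⟨μ, hμ, rfl⟩
  have h1 : (⨅ b : B, ∑ a, μ a * ∑ s', P s a b s' * Q s')
      ≤ (⨅ b : B, ∑ a, μ a * ∑ s', P s a b s' * Q' s') + ε := by
    rw [← sub_le_iff_le_add]
    refine le_ciInf fun b => ?_
    rw [sub_le_iff_le_add]
    calc (⨅ b : B, ∑ a, μ a * ∑ s', P s a b s' * Q s')
        ≤ ∑ a, μ a * ∑ s', P s a b s' * Q s' :=
          ciInf_le (Set.Finite.bddBelow (Set.finite_range _)) b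
      _ ≤ ∑ a, μ a * ∑ s', P s a b s' * Q' s' + ε := by
          have := (abs_sub_le_iff.mp (mu_abs_le P hP0 hP1 hε s hμ b)).1
          linarith
  refine h1.trans (add_le_add_left ?_ ε)
  exact le_csSup (mop_bddAbove P hP0 hP1 Q' s) ⟨μ, hμ, rfl⟩

include hP0 hP1 in
lemma mop_abs_le {Q Q' : S → ℝ} {ε : ℝ} (hε : ∀ s', |Q s' - Q' s'| ≤ ε) (s : S) :
    |Mop P Q s - Mop P Q' s| ≤ ε := by
  have hε' : ∀ s', |Q' s' - Q s'| ≤ ε := fun s' => by rw [abs_sub_comm]; exact hε s'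
  have h1 := mop_le P hP0 hP1 hε s
  have h2 := mop_le P hP0 hP1 hε' s
  rw [abs_sub_le_iff]
  constructor <;> linarith

end helpers

section helpers2

variable {S A B : Type*} [Fintype S] [Fintype A] [Fintype B]
  [Nonempty S] [Nonempty A] [Nonempty B]
  (P : S → A → B → S → ℝ)
  (hP0 : ∀ s a b s', 0 ≤ P s a b s')
  (hP1 : ∀ s a b, ∑ s', P s a b s' = 1)

include hP0 hP1 in
lemma mtrunc_abs_le (F : Set S) {Q Q' : S → ℝ} {ε : ℝ}
    (hε : ∀ s', |Q s' - Q' s'| ≤ ε) (s : S) :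
    |Mtrunc P F Q s - Mtrunc P F Q' s| ≤ ε := by
  classical
  have hε0 : 0 ≤ ε := le_trans (abs_nonneg _) (hε (Classical.arbitrary S))
  unfold Mtrunc
  split
  · simpa using hε0
  · exact mop_abs_le P hP0 hP1 hε s

end helpers2


/-- The limit `Q*` of value iteration is a fixed point of the truncated operator
`M̃` (the Bellman / Shapley-type equation of Proposition 3). -/
theorem Mtrunc_limit_is_fixed_point
    {S A B : Type*} [Fintype S] [Fintype A] [Fintype B]
    [Nonempty S] [Nonempty A] [Nonempty B]
    (P : S → A → B → S → ℝ)
    (hP0 : ∀ s a b s', 0 ≤ P s a b s')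
    (hP1 : ∀ s a b, ∑ s', P s a b s' = 1)
    (F : Set S) (Qstar : S → ℝ)
    (hconv : ∀ s : S,
      Filter.Tendsto (fun k : ℕ => (Mtrunc P F)^[k] (0 : S → ℝ) s) Filter.atTop (nhds (Qstar s))) :
    ∀ s, Mtrunc P F Qstar s = Qstar s := by
  intro s
  set Qk : ℕ → S → ℝ := fun k => (Mtrunc P F)^[k] (0 : S → ℝ) with hQk
  have hD : ∀ s', Tendsto (fun k => |Qk k s' - Qstar s'|) atTop (nhds 0) := by
    intro s'
    have h1 : Tendsto (fun k => Qk k s' - Qstar s') atTop (nhds 0) := by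
      simpa using (hconv s').sub (tendsto_const_nhds (x := Qstar s'))
    simpa using h1.abs
  have hDsum : Tendsto (fun k => ∑ s', |Qk k s' - Qstar s'|) atTop (nhds 0) := by
    have := tendsto_finset_sum (Finset.univ : Finset S) (fun s' _ => hD s')
    simpa using this
  have key : ∀ k, |Qk (k + 1) s - Mtrunc P F Qstar s| ≤ ∑ s', |Qk k s' - Qstar s'| := by
    intro k
    have h1 : Qk (k + 1) s = Mtrunc P F (Qk k) s := by
      rw [hQk]; simp [Function.iterate_succ_apply']
    rw [h1]
    refine mtrunc_abs_le P hP0 hP1 F (fun s' => ?_) s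
    exact Finset.single_le_sum (f := fun t => |Qk k t - Qstar t|) (fun t _ => abs_nonneg _) (Finset.mem_univ s')
  have h2 : Tendsto (fun k => Qk (k + 1) s) atTop (nhds (Mtrunc P F Qstar s)) := by
    rw [tendsto_iff_dist_tendsto_zero]
    simp only [Real.dist_eq]
    exact squeeze_zero (fun k => abs_nonneg _) key hDsum
  have h3 : Tendsto (fun k => Qk (k + 1) s) atTop (nhds (Qstar s)) :=
    (hconv s).comp (tendsto_add_atTop_nat 1)
  exact tendsto_nhds_unique h2 h3
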